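/- arXiv:2005.13660 — 5 statements merged into one kernel-verified Lean document; each statement's English description precedes it below -/
import Mathlib

section
/- Define F₅ : (0,2) → ℝ by F₅(h) = 4h − 2h² + 2√(4h² − h⁴). Then F₅ attains its maximum on [1,2) at the unique point η satisfying 2η³ − 2η² − 7η + 8 = 0 with η ≈ 1.2622, and the maximum value is F₅(η) = 4η − 2η² + 2√(4η² − η⁴) ≈ 5.77886. -/
open Real

noncomputable def F₅ (h : ℝ) : ℝ := 4 * h - 2 * h ^ 2 + 2 * Real.sqrt (4 * h ^ 2 - h ^ 4)

noncomputable def η : ℝ :=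
  (1 / 3) * (1 - Real.sqrt 46 * Real.sin (π / 6 - (1 / 3) * Real.arccos (-149 / (23 * Real.sqrt 46))))

lemma s46_sq : (Real.sqrt 46) ^ 2 = 46 := Real.sq_sqrt (by norm_num)

lemma s46_lb : (6.7 : ℝ) < Real.sqrt 46 := by
  nlinarith [s46_sq, Real.sqrt_nonneg 46]

lemma s46_ub : Real.sqrt 46 < 6.79 := by
  nlinarith [s46_sq, Real.sqrt_nonneg 46]

/-- η satisfies the cubic. -/
lemma eta_cubic : 2 * η ^ 3 - 2 * η ^ 2 - 7 * η + 8 = 0 := by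
  have h46 := s46_sq
  have hs46pos : (0:ℝ) < Real.sqrt 46 := by nlinarith [s46_lb]
  set x : ℝ := -149 / (23 * Real.sqrt 46) with hx
  have hx1 : -1 ≤ x := by
    rw [hx, le_div_iff₀ (by positivity : (0:ℝ) < 23 * Real.sqrt 46)]
    nlinarith [s46_lb]
  have hx2 : x ≤ 1 := by
    rw [hx]
    have : (0:ℝ) < 23 * Real.sqrt 46 := by positivity
    rw [div_le_iff₀ this]
    nlinarith [s46_lb]
  set θ : ℝ := π / 6 - (1/3) * Real.arccos x with hθ
  have h3θ : 3 * θ = π / 2 - Real.arccos x := by rw [hθ]; ring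
  have hsin3 : Real.sin (3 * θ) = x := by
    rw [h3θ, Real.sin_pi_div_two_sub, Real.cos_arccos hx1 hx2]
  have htriple : 3 * Real.sin θ - 4 * Real.sin θ ^ 3 = x := by
    rw [← Real.sin_three_mul, hsin3]
  set S : ℝ := Real.sin θ with hS
  have hSx : 23 * Real.sqrt 46 * (4 * S ^ 3 - 3 * S) = 149 := by
    have : 4 * S ^ 3 - 3 * S = -x := by rw [← htriple]; ring
    rw [this, hx]
    field_simp
  have hη : η = (1/3) * (1 - Real.sqrt 46 * S) := rfl
  rw [hη]
  have e1 : Real.sqrt 46 ^ 3 = 46 * Real.sqrt 46 := by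
    nlinarith [s46_sq]
  linear_combination (-(1/27 : ℝ)) * hSx + (-(2/27) * Real.sqrt 46 * S ^ 3) * h46

lemma eta_rough : 0 < η ∧ η < 1.47 := by
  have h46 := s46_sq
  have hlb := s46_lb
  have hub := s46_ub
  have hspos : (0:ℝ) < Real.sqrt 46 := by linarith
  set x : ℝ := -149 / (23 * Real.sqrt 46) with hx
  have hxneg : x < 0 := by
    rw [hx]
    apply div_neg_of_neg_of_pos <;> [norm_num; positivity]
  have hxgt : -1 < x := by
    rw [hx, lt_div_iff₀ (by positivity)]
    nlinarith
  have hac_gt : π / 2 < Real.arccos x := by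
    by_contra hcon
    push_neg at hcon
    rw [Real.arccos_le_pi_div_two] at hcon
    linarith
  have hac_le : Real.arccos x ≤ π := Real.arccos_le_pi x
  set θ : ℝ := π / 6 - (1/3) * Real.arccos x with hθ
  clear_value θ
  have hθneg : θ < 0 := by rw [hθ]; linarith
  have hθlb : -(π/6) ≤ θ := by rw [hθ]; linarith
  have hpi : (0:ℝ) < π := Real.pi_pos
  set S : ℝ := Real.sin θ with hS
  clear_value S
  have hSneg : S < 0 := by
    rw [hS]
    exact Real.sin_neg_of_neg_of_neg_pi_lt hθneg (by linarith)
  have hSlb : -(1/2 : ℝ) ≤ S := by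
    have h := Real.sin_le_sin_of_le_of_le_pi_div_two
      (x := -(π/6)) (y := θ) (by linarith) (by linarith) hθlb
    rw [Real.sin_neg, Real.sin_pi_div_six] at h
    rw [hS]; exact h
  have hη : η = (1/3) * (1 - Real.sqrt 46 * S) := by rw [hS, hθ]; rfl
  constructor
  · rw [hη]; nlinarith
  · rw [hη]; nlinarith

lemma eta_bounds : 1.26 < η ∧ η < 1.27 := by
  obtain ⟨h0, h147⟩ := eta_rough
  have hc := eta_cubic
  have hq1 : 2 * η ^ 2 + (13/25) * η < 79310/12500 := by nlinarith
  have hq2 : 2 * η ^ 2 + (27/50) * η < 63142/10000 := by nlinarith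
  constructor
  · nlinarith [hc, hq1, h0, h147]
  · nlinarith [hc, hq2, h0, h147]

noncomputable def tη : ℝ := Real.sqrt (4 * η ^ 2 - η ^ 4)

lemma htarg' : (0:ℝ) ≤ 4 * η ^ 2 - η ^ 4 := by
  obtain ⟨helb, heub⟩ := eta_bounds
  have h1 : (0:ℝ) < η := by linarith
  have h2 : η ^ 2 < 1.62 := by nlinarith
  nlinarith [sq_nonneg η, h2, mul_pos h1 h1]

lemma ht2' : tη ^ 2 = 4 * η ^ 2 - η ^ 4 := Real.sq_sqrt htarg'

lemma htnn' : 0 ≤ tη := Real.sqrt_nonneg _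

lemma htlb' : 1.9 < tη := by
  obtain ⟨helb, heub⟩ := eta_bounds
  have h1 : (0:ℝ) < η := by linarith
  have hlb2 : (1.58:ℝ) < η ^ 2 := by nlinarith
  have hub2 : η ^ 2 < (1.62:ℝ) := by nlinarith
  have hkey : (3.7:ℝ) < 4 * η ^ 2 - η ^ 4 := by nlinarith [mul_pos h1 h1]
  nlinarith [ht2', htnn', hkey]

lemma hB' : tη * (η - 1) = 2 * η - η ^ 3 := by
  obtain ⟨helb, heub⟩ := eta_bounds
  have hc := eta_cubic
  have ht2 := ht2'
  have htnn := htnn'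
  have hsq : (tη * (η - 1)) ^ 2 = (2 * η - η ^ 3) ^ 2 := by nlinarith [ht2, hc]
  have h1 : 0 ≤ tη * (η - 1) := by nlinarith
  have h2 : 0 ≤ 2 * η - η ^ 3 := by nlinarith
  nlinarith [hsq, h1, h2]

lemma hcpos' : (0:ℝ) < tη + 2 * η - η ^ 2 := by
  obtain ⟨helb, heub⟩ := eta_bounds
  nlinarith [htlb']

lemma key_ineq : ∀ h : ℝ, 1 ≤ h → h < 2 →
    Real.sqrt (4 * h ^ 2 - h ^ 4) ≤ h ^ 2 - 2 * h + (tη + 2 * η - η ^ 2) ∧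
    (0:ℝ) ≤ 4 * h ^ 2 - h ^ 4 := by
  obtain ⟨helb, heub⟩ := eta_bounds
  have ht2 := ht2'
  have htnn := htnn'
  have htlb := htlb'
  have hB := hB'
  intro h h1 h2
  have hsarg : (0:ℝ) ≤ 4 * h ^ 2 - h ^ 4 := by
    have h4 : (0:ℝ) ≤ (2 - h) * (2 + h) := mul_nonneg (by linarith) (by linarith)
    nlinarith [sq_nonneg h, h4, mul_nonneg (sq_nonneg h) h4]
  set s : ℝ := Real.sqrt (4 * h ^ 2 - h ^ 4) with hsdef
  have hs2 : s ^ 2 = 4 * h ^ 2 - h ^ 4 := Real.sq_sqrt hsarg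
  have hsnn : 0 ≤ s := Real.sqrt_nonneg _
  set R : ℝ := h ^ 2 - 2 * h + (tη + 2 * η - η ^ 2) with hRdef
  have hRpos : 0 < R := by rw [hRdef]; nlinarith [sq_nonneg (h - 1)]
  have key : η ^ 2 * (R ^ 2 - (4 * h ^ 2 - h ^ 4)) =
      2 * η ^ 2 * h ^ 2 * (h - η) ^ 2 + 4 * η ^ 2 * (η - 1) * h * (h - η) ^ 2 +
        (tη + 2 * η - η ^ 2) ^ 2 * (h - η) ^ 2 := by
    rw [hRdef]
    linear_combination (2 * h * η - h ^ 2) * ht2 + (4 * h * η * (h - η)) * hB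
  have hkey_nn : 0 ≤ η ^ 2 * (R ^ 2 - (4 * h ^ 2 - h ^ 4)) := by
    rw [key]
    have : (0:ℝ) ≤ η - 1 := by linarith
    positivity
  have hη2 : (0:ℝ) < η ^ 2 := by positivity
  have hR2 : s ^ 2 ≤ R ^ 2 := by
    have h9 : 0 ≤ R ^ 2 - (4 * h ^ 2 - h ^ 4) := (mul_nonneg_iff_of_pos_left hη2).mp hkey_nn
    rw [hs2]; linarith
  exact ⟨(pow_le_pow_iff_left₀ hsnn hRpos.le two_ne_zero).mp hR2, hsarg⟩

/-- F₅(h) = 4h − 2h² + 2√(4h² − h⁴) attains its maximum on [1,2) at the unique point η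
satisfying 2η³ − 2η² − 7η + 8 = 0 (η ≈ 1.2622), with maximum value F₅(η) ≈ 5.77886. -/
theorem F₅_max_at_η :
    η ∈ Set.Ico (1 : ℝ) 2 ∧
    2 * η ^ 3 - 2 * η ^ 2 - 7 * η + 8 = 0 ∧
    (∀ h ∈ Set.Ico (1 : ℝ) 2, F₅ h ≤ F₅ η) ∧
    (∀ h ∈ Set.Ico (1 : ℝ) 2, F₅ h = F₅ η → h = η) ∧
    F₅ η = 4 * η - 2 * η ^ 2 + 2 * Real.sqrt (4 * η ^ 2 - η ^ 4) := by
  obtain ⟨helb, heub⟩ := eta_bounds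
  have hc := eta_cubic
  have ht2 := ht2'
  have hB := hB'
  have hFη : F₅ η = 4 * η - 2 * η ^ 2 + 2 * tη := by rw [F₅, tη]
  refine ⟨⟨by linarith, by linarith⟩, hc, ?_, ?_, by rw [F₅]⟩
  · intro h ⟨h1, h2⟩
    obtain ⟨hineq, _⟩ := key_ineq h h1 h2
    have hFh : F₅ h = 4 * h - 2 * h ^ 2 + 2 * Real.sqrt (4 * h ^ 2 - h ^ 4) := by rw [F₅]
    rw [hFh, hFη]
    linarith
  · intro h ⟨h1, h2⟩ heq
    obtain ⟨hineq, hsarg⟩ := key_ineq h h1 h2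
    have hFh : F₅ h = 4 * h - 2 * h ^ 2 + 2 * Real.sqrt (4 * h ^ 2 - h ^ 4) := by rw [F₅]
    rw [hFh, hFη] at heq
    set s : ℝ := Real.sqrt (4 * h ^ 2 - h ^ 4) with hsdef
    have hs2 : s ^ 2 = 4 * h ^ 2 - h ^ 4 := Real.sq_sqrt hsarg
    have hseq : s = h ^ 2 - 2 * h + (tη + 2 * η - η ^ 2) := by linarith
    have key : η ^ 2 * ((h ^ 2 - 2 * h + (tη + 2 * η - η ^ 2)) ^ 2 - (4 * h ^ 2 - h ^ 4)) =
        2 * η ^ 2 * h ^ 2 * (h - η) ^ 2 + 4 * η ^ 2 * (η - 1) * h * (h - η) ^ 2 +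
          (tη + 2 * η - η ^ 2) ^ 2 * (h - η) ^ 2 := by
      linear_combination (2 * h * η - h ^ 2) * ht2 + (4 * h * η * (h - η)) * hB
    have e1 : η ^ 2 * ((h ^ 2 - 2 * h + (tη + 2 * η - η ^ 2)) ^ 2 - (4 * h ^ 2 - h ^ 4)) = 0 := by
      rw [← hseq, hs2]; ring
    have hzero : 2 * η ^ 2 * h ^ 2 * (h - η) ^ 2 + 4 * η ^ 2 * (η - 1) * h * (h - η) ^ 2 +
        (tη + 2 * η - η ^ 2) ^ 2 * (h - η) ^ 2 = 0 := by rw [← key]; exact e1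
    have hηm1 : (0:ℝ) ≤ η - 1 := by linarith
    have ha : 0 ≤ 2 * η ^ 2 * h ^ 2 * (h - η) ^ 2 := by positivity
    have hb : 0 ≤ 4 * η ^ 2 * (η - 1) * h * (h - η) ^ 2 := by positivity
    have hcc : 0 ≤ (tη + 2 * η - η ^ 2) ^ 2 * (h - η) ^ 2 := by positivity
    have hcpos := hcpos'
    have hprod0 : (tη + 2 * η - η ^ 2) ^ 2 * (h - η) ^ 2 = 0 :=
      le_antisymm (by linarith) hcc
    have hsq0 : (h - η) ^ 2 = 0 := by
      rcases mul_eq_zero.mp hprod0 with h' | h'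
      · exact absurd h' (by positivity)
      · exact h'
    have := pow_eq_zero_iff (n := 2) (by norm_num) |>.mp hsq0
    linarith [this]
end

section
/- For v ≥ 5 let ω_v = π/(v−2) and define S : (0,2) → ℝ by S(h) = (v−2)·sin ω_v · (√(2h³ − h⁴ + (2h − h²)²·cos²ω_v) + √((2−h)²(2h − h²) + (2h − h²)²·cos²ω_v)). Then h = 1 is the unique critical point of S in (0,2); moreover S′(h) > 0 for h ∈ (0,1) and S′(h) < 0 for h ∈ (1,2), so S attains its strict global maximum at h = 1 with value S(1) = 2(v−2)·√(1 + cos²ω_v)·sin ω_v. -/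
open Real Set

noncomputable section BipyrAux

def bpA (c : ℝ) (h : ℝ) : ℝ := 2 * h ^ 3 - h ^ 4 + (2 * h - h ^ 2) ^ 2 * c
def bpB (c : ℝ) (h : ℝ) : ℝ := (2 - h) ^ 2 * (2 * h - h ^ 2) + (2 * h - h ^ 2) ^ 2 * c
def bpA' (c : ℝ) (h : ℝ) : ℝ := 6 * h ^ 2 - 4 * h ^ 3 + (2 * (2 * h - h ^ 2) * (2 - 2 * h)) * c
def bpB' (c : ℝ) (h : ℝ) : ℝ :=
  (-2 * (2 - h) * (2 * h - h ^ 2) + (2 - h) ^ 2 * (2 - 2 * h)) +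
    (2 * (2 * h - h ^ 2) * (2 - 2 * h)) * c

lemma bpA_pos (c : ℝ) (hc : 0 ≤ c) {h : ℝ} (h0 : 0 < h) (h2 : h < 2) : 0 < bpA c h := by
  have hq : 0 < 2 * h - h ^ 2 := by nlinarith
  have : 0 < h ^ 3 * (2 - h) := by nlinarith [pow_pos h0 3]
  have : 0 ≤ (2 * h - h ^ 2) ^ 2 * c := by positivity
  unfold bpA; nlinarith

lemma bpB_pos (c : ℝ) (hc : 0 ≤ c) {h : ℝ} (h0 : 0 < h) (h2 : h < 2) : 0 < bpB c h := by
  have hq : 0 < 2 * h - h ^ 2 := by nlinarith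
  have h1 : 0 < (2 - h) ^ 2 := by nlinarith
  have : 0 ≤ (2 * h - h ^ 2) ^ 2 * c := by positivity
  unfold bpB; nlinarith

/-- Core sign lemma: on (0,1) the derivative-numerator expression is positive. -/
lemma bp_core (c : ℝ) (hc : 0 ≤ c) {h : ℝ} (h0 : 0 < h) (h1 : h < 1) :
    0 < bpA' c h / (2 * Real.sqrt (bpA c h)) + bpB' c h / (2 * Real.sqrt (bpB c h)) := by
  have h2 : h < 2 := by linarith
  have hA := bpA_pos c hc h0 h2
  have hB := bpB_pos c hc h0 h2
  have hsA : 0 < Real.sqrt (bpA c h) := Real.sqrt_pos.2 hA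
  have hsB : 0 < Real.sqrt (bpB c h) := Real.sqrt_pos.2 hB
  have hsA2 : Real.sqrt (bpA c h) ^ 2 = bpA c h := Real.sq_sqrt hA.le
  have hsB2 : Real.sqrt (bpB c h) ^ 2 = bpB c h := Real.sq_sqrt hB.le
  have hq : 0 < 2 * h - h ^ 2 := by nlinarith
  have hA' : 0 < bpA' c h := by
    have : 0 ≤ (2 * (2 * h - h ^ 2) * (2 - 2 * h)) * c := by
      have : 0 ≤ 2 - 2 * h := by linarith
      positivity
    unfold bpA'; nlinarith
  rcases le_or_gt 0 (bpB' c h) with hB' | hB'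
  · have t1 : 0 < bpA' c h / (2 * Real.sqrt (bpA c h)) := by positivity
    have t2 : 0 ≤ bpB' c h / (2 * Real.sqrt (bpB c h)) := by positivity
    linarith
  · -- B' < 0 forces h > 1/2
    have hhalf : 1 / 2 < h := by
      by_contra hle
      push_neg at hle
      have key : 0 ≤ bpB' c h := by
        have e : bpB' c h = 2 * (2 - h) ^ 2 * (1 - 2 * h) +
            (2 * (2 * h - h ^ 2) * (2 - 2 * h)) * c := by unfold bpB'; ring
        rw [e]
        have : 0 ≤ 2 * (2 - h) ^ 2 * (1 - 2 * h) := by nlinarith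
        have : 0 ≤ (2 * (2 * h - h ^ 2) * (2 - 2 * h)) * c := by
          have : 0 ≤ 2 - 2 * h := by linarith
          positivity
        linarith
      linarith
    -- P = A'^2 B - B'^2 A > 0 via factorization
    have hG : 0 < (2 * h - h ^ 2) * (1 + 2 * c) *
        ((2 * h - h ^ 2) - (1 - h) ^ 2 + 2 * c * (1 - h) ^ 2) +
        2 * c * (6 * h - 3 * h ^ 2 - 2) * ((1 - h) ^ 2 + c * (2 * h - h ^ 2)) := by
      have e1 : 0 < (2 * h - h ^ 2) - (1 - h) ^ 2 + 2 * c * (1 - h) ^ 2 := by nlinarith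
      have e2 : 0 < 6 * h - 3 * h ^ 2 - 2 := by nlinarith
      have e3 : 0 < (2 * h - h ^ 2) * (1 + 2 * c) := by positivity
      have e4 : 0 ≤ 2 * c * (6 * h - 3 * h ^ 2 - 2) * ((1 - h) ^ 2 + c * (2 * h - h ^ 2)) := by
        positivity
      nlinarith
    have hP : 0 < bpA' c h ^ 2 * bpB c h - bpB' c h ^ 2 * bpA c h := by
      have e : bpA' c h ^ 2 * bpB c h - bpB' c h ^ 2 * bpA c h =
          16 * (1 - h) * (2 * h - h ^ 2) ^ 2 *
          ((2 * h - h ^ 2) * (1 + 2 * c) *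
            ((2 * h - h ^ 2) - (1 - h) ^ 2 + 2 * c * (1 - h) ^ 2) +
          2 * c * (6 * h - 3 * h ^ 2 - 2) * ((1 - h) ^ 2 + c * (2 * h - h ^ 2))) := by
        unfold bpA bpB bpA' bpB'; ring
      rw [e]
      have : 0 < 16 * (1 - h) * (2 * h - h ^ 2) ^ 2 := by
        have : 0 < 1 - h := by linarith
        positivity
      positivity
    have hD : 0 < bpA' c h * Real.sqrt (bpB c h) - bpB' c h * Real.sqrt (bpA c h) := by
      have : 0 < bpA' c h * Real.sqrt (bpB c h) := by positivity
      nlinarith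
    have hN : 0 < bpA' c h * Real.sqrt (bpB c h) + bpB' c h * Real.sqrt (bpA c h) := by
      have key : (bpA' c h * Real.sqrt (bpB c h) + bpB' c h * Real.sqrt (bpA c h)) *
          (bpA' c h * Real.sqrt (bpB c h) - bpB' c h * Real.sqrt (bpA c h)) =
          bpA' c h ^ 2 * bpB c h - bpB' c h ^ 2 * bpA c h := by
        linear_combination (bpA' c h) ^ 2 * hsB2 - (bpB' c h) ^ 2 * hsA2
      nlinarith [key, hP, hD]
    have e : bpA' c h / (2 * Real.sqrt (bpA c h)) + bpB' c h / (2 * Real.sqrt (bpB c h)) =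
        (bpA' c h * Real.sqrt (bpB c h) + bpB' c h * Real.sqrt (bpA c h)) /
          (2 * Real.sqrt (bpA c h) * Real.sqrt (bpB c h)) := by
      field_simp
    rw [e]
    positivity

end BipyrAux

lemma bpA_hasDeriv (c : ℝ) (h : ℝ) : HasDerivAt (bpA c) (bpA' c h) h := by
  have hq : HasDerivAt (fun x : ℝ => 2 * x - x ^ 2) (2 - 2 * h) h := by
    simpa using ((hasDerivAt_id h).const_mul 2).fun_sub (hasDerivAt_pow 2 h)
  have h3 : HasDerivAt (fun x : ℝ => 2 * x ^ 3) (2 * (3 * h ^ 2)) h := by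
    simpa using (hasDerivAt_pow 3 h).const_mul 2
  have h4 : HasDerivAt (fun x : ℝ => x ^ 4) (4 * h ^ 3) h := by
    simpa using hasDerivAt_pow 4 h
  have hq2 : HasDerivAt (fun x : ℝ => (2 * x - x ^ 2) ^ 2 * c)
      (((2 : ℕ) : ℝ) * (2 * h - h ^ 2) ^ 1 * (2 - 2 * h) * c) h := (hq.pow 2).mul_const c
  have := (h3.fun_sub h4).fun_add hq2
  unfold bpA bpA'
  refine this.congr_deriv ?_
  push_cast
  ring

lemma bpB_hasDeriv (c : ℝ) (h : ℝ) : HasDerivAt (bpB c) (bpB' c h) h := by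
  have hq : HasDerivAt (fun x : ℝ => 2 * x - x ^ 2) (2 - 2 * h) h := by
    simpa using ((hasDerivAt_id h).const_mul 2).fun_sub (hasDerivAt_pow 2 h)
  have ht : HasDerivAt (fun x : ℝ => (2 - x) ^ 2) (((2 : ℕ) : ℝ) * (2 - h) ^ 1 * (0 - 1)) h := by
    exact (((hasDerivAt_const h (2:ℝ)).sub (hasDerivAt_id h)).pow 2)
  have h1 : HasDerivAt (fun x : ℝ => (2 - x) ^ 2 * (2 * x - x ^ 2))
      ((((2 : ℕ) : ℝ) * (2 - h) ^ 1 * (0 - 1)) * (2 * h - h ^ 2) + (2 - h) ^ 2 * (2 - 2 * h)) h :=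
    ht.mul hq
  have hq2 : HasDerivAt (fun x : ℝ => (2 * x - x ^ 2) ^ 2 * c)
      (((2 : ℕ) : ℝ) * (2 * h - h ^ 2) ^ 1 * (2 - 2 * h) * c) h := (hq.pow 2).mul_const c
  have := h1.fun_add hq2
  unfold bpB bpB'
  refine this.congr_deriv ?_
  push_cast
  ring

lemma bp_sqrt_hasDeriv (c : ℝ) (hc : 0 ≤ c) (K : ℝ) {h : ℝ} (h0 : 0 < h) (h2 : h < 2) :
    HasDerivAt (fun x => K * (Real.sqrt (bpA c x) + Real.sqrt (bpB c x)))
      (K * (bpA' c h / (2 * Real.sqrt (bpA c h)) + bpB' c h / (2 * Real.sqrt (bpB c h)))) h := by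
  have hA := bpA_pos c hc h0 h2
  have hB := bpB_pos c hc h0 h2
  exact (((bpA_hasDeriv c h).sqrt hA.ne').add ((bpB_hasDeriv c h).sqrt hB.ne')).const_mul K
/-- For v ≥ 5 and ω = π/(v−2), the bipyramid surface area function
S(h) = (v−2)·sin ω·(√(2h³ − h⁴ + (2h−h²)²cos²ω) + √((2−h)²(2h−h²) + (2h−h²)²cos²ω))
has h = 1 as its unique critical point on (0,2), with S′ > 0 on (0,1) and S′ < 0 on (1,2),
hence attains its strict global maximum at h = 1 with value 2(v−2)·√(1+cos²ω)·sin ω. -/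
theorem bipyramid_surface_max (v : ℕ) (hv : 5 ≤ v) :
    ∀ S : ℝ → ℝ,
      (S = fun h => (v - 2 : ℝ) * Real.sin (π / (v - 2)) *
        (Real.sqrt (2 * h ^ 3 - h ^ 4 + (2 * h - h ^ 2) ^ 2 * Real.cos (π / (v - 2)) ^ 2) +
         Real.sqrt ((2 - h) ^ 2 * (2 * h - h ^ 2) +
            (2 * h - h ^ 2) ^ 2 * Real.cos (π / (v - 2)) ^ 2))) →
      (∀ h ∈ Ioo (0 : ℝ) 1, 0 < deriv S h) ∧
      (∀ h ∈ Ioo (1 : ℝ) 2, deriv S h < 0) ∧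
      deriv S 1 = 0 ∧
      (∀ h ∈ Ioo (0 : ℝ) 2, h ≠ 1 → S h < S 1) ∧
      S 1 = 2 * (v - 2 : ℝ) * Real.sqrt (1 + Real.cos (π / (v - 2)) ^ 2) *
        Real.sin (π / (v - 2)) := by
  intro S hS
  have hv3 : (3 : ℝ) ≤ (v : ℝ) - 2 := by
    have : (5 : ℝ) ≤ (v : ℝ) := by exact_mod_cast hv
    linarith
  set ω : ℝ := π / ((v : ℝ) - 2) with hωdef
  set c : ℝ := Real.cos ω ^ 2 with hcdef
  set K : ℝ := ((v : ℝ) - 2) * Real.sin ω with hKdef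
  have hc0 : 0 ≤ c := sq_nonneg _
  have hω0 : 0 < ω := div_pos Real.pi_pos (by linarith)
  have hωπ : ω < π := div_lt_self Real.pi_pos (by linarith)
  have hsin : 0 < Real.sin ω := Real.sin_pos_of_pos_of_lt_pi hω0 hωπ
  have hK : 0 < K := mul_pos (by linarith) hsin
  have hSe : S = fun h => K * (Real.sqrt (bpA c h) + Real.sqrt (bpB c h)) := hS
  subst hSe
  have hderiv : ∀ h : ℝ, 0 < h → h < 2 →
      deriv (fun h => K * (Real.sqrt (bpA c h) + Real.sqrt (bpB c h))) h =
        K * (bpA' c h / (2 * Real.sqrt (bpA c h)) + bpB' c h / (2 * Real.sqrt (bpB c h))) :=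
    fun h h0 h2 => (bp_sqrt_hasDeriv c hc0 K h0 h2).deriv
  have pos1 : ∀ h ∈ Ioo (0 : ℝ) 1,
      0 < deriv (fun h => K * (Real.sqrt (bpA c h) + Real.sqrt (bpB c h))) h := by
    intro h ⟨h0, h1⟩
    rw [hderiv h h0 (by linarith)]
    exact mul_pos hK (bp_core c hc0 h0 h1)
  have neg2 : ∀ h ∈ Ioo (1 : ℝ) 2,
      deriv (fun h => K * (Real.sqrt (bpA c h) + Real.sqrt (bpB c h))) h < 0 := by
    intro h ⟨h1, h2⟩
    rw [hderiv h (by linarith) h2]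
    have eA : bpA c h = bpB c (2 - h) := by unfold bpA bpB; ring
    have eB : bpB c h = bpA c (2 - h) := by unfold bpA bpB; ring
    have eA' : bpA' c h = -(bpB' c (2 - h)) := by unfold bpA' bpB'; ring
    have eB' : bpB' c h = -(bpA' c (2 - h)) := by unfold bpA' bpB'; ring
    have hcore := bp_core c hc0 (show (0:ℝ) < 2 - h by linarith) (show (2:ℝ) - h < 1 by linarith)
    rw [eA, eB, eA', eB']
    have : -(bpB' c (2 - h)) / (2 * Real.sqrt (bpB c (2 - h))) +
        -(bpA' c (2 - h)) / (2 * Real.sqrt (bpA c (2 - h))) =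
        -(bpA' c (2 - h) / (2 * Real.sqrt (bpA c (2 - h))) +
          bpB' c (2 - h) / (2 * Real.sqrt (bpB c (2 - h)))) := by ring
    rw [this, mul_neg, neg_lt_zero]
    exact mul_pos hK hcore
  have hcont : Continuous (fun h => K * (Real.sqrt (bpA c h) + Real.sqrt (bpB c h))) := by
    apply Continuous.mul continuous_const
    apply Continuous.add
    · exact Real.continuous_sqrt.comp (by unfold bpA; fun_prop)
    · exact Real.continuous_sqrt.comp (by unfold bpB; fun_prop)
  have hA1 : bpA c 1 = 1 + c := by unfold bpA; ring
  have hB1 : bpB c 1 = 1 + c := by unfold bpB; ring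
  have hA'1 : bpA' c 1 = 2 := by unfold bpA'; ring
  have hB'1 : bpB' c 1 = -2 := by unfold bpB'; ring
  have hcrit : deriv (fun h => K * (Real.sqrt (bpA c h) + Real.sqrt (bpB c h))) 1 = 0 := by
    rw [hderiv 1 one_pos one_lt_two, hA1, hB1, hA'1, hB'1]
    ring
  refine ⟨pos1, neg2, hcrit, ?_, ?_⟩
  · intro h ⟨h0, h2⟩ hne
    rcases lt_or_gt_of_ne hne with h1 | h1
    · have hmono : StrictMonoOn (fun h => K * (Real.sqrt (bpA c h) + Real.sqrt (bpB c h)))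
          (Icc h 1) := by
        apply strictMonoOn_of_deriv_pos (convex_Icc h 1) hcont.continuousOn
        intro x hx
        rw [interior_Icc] at hx
        exact pos1 x ⟨lt_trans h0 hx.1, hx.2⟩
      exact hmono (left_mem_Icc.2 h1.le) (right_mem_Icc.2 h1.le) h1
    · have hanti : StrictAntiOn (fun h => K * (Real.sqrt (bpA c h) + Real.sqrt (bpB c h)))
          (Icc 1 h) := by
        apply strictAntiOn_of_deriv_neg (convex_Icc 1 h) hcont.continuousOn
        intro x hx
        rw [interior_Icc] at hx
        exact neg2 x ⟨hx.1, lt_trans hx.2 h2⟩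
      exact hanti (left_mem_Icc.2 h1.le) (right_mem_Icc.2 h1.le) h1
  · show K * (Real.sqrt (bpA c 1) + Real.sqrt (bpB c 1)) = _
    rw [hA1, hB1, hKdef]
    ring
end

section
/- 4η − 2η² + 2√(4η² − η⁴) < 3√15/2, where η = (1/3)(1 − √46·sin(π/6 − (1/3)·arccos(−149/(23√46)))) is the root of 2h³ − 2h² − 7h + 8 = 0 in (1, 1.5). In fact, 4η − 2η² + 2√(4η² − η⁴) < 5.78 < 5.80 < 3√15/2. -/
open Real

set_option maxHeartbeats 1000000 in
/-- The maximal surface area of an inscribed 5-pyramid is less than that of the optimal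
5-bipyramid: 4η − 2η² + 2√(4η² − η⁴) < 5.78 < 5.80 < 3√15/2, where η is the root of
2h³ − 2h² − 7h + 8 = 0 in (1, 1.5). -/
theorem pyramid_lt_bipyramid :
    η ∈ Set.Ioo (1 : ℝ) 1.5 ∧
    2 * η ^ 3 - 2 * η ^ 2 - 7 * η + 8 = 0 ∧
    4 * η - 2 * η ^ 2 + 2 * Real.sqrt (4 * η ^ 2 - η ^ 4) < 5.78 ∧
    (5.78 : ℝ) < 5.80 ∧
    (5.80 : ℝ) < 3 * Real.sqrt 15 / 2 := by
  have hπpos : 0 < π := Real.pi_pos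
  have h46 : Real.sqrt 46 ^ 2 = 46 := Real.sq_sqrt (by norm_num)
  have h46nn : (0:ℝ) ≤ Real.sqrt 46 := Real.sqrt_nonneg 46
  have h46lo : (6.78:ℝ) < Real.sqrt 46 := by nlinarith
  have h46hi : Real.sqrt 46 < 6.79 := by nlinarith
  obtain ⟨x, hxdef⟩ : ∃ x : ℝ, x = -149 / (23 * Real.sqrt 46) := ⟨_, rfl⟩
  have hx1 : -1 ≤ x := by
    rw [hxdef, neg_div, neg_le_neg_iff, div_le_one (by positivity)]
    nlinarith
  have hx2 : x ≤ 1 := by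
    have : x ≤ 0 := by
      rw [hxdef]
      apply div_nonpos_of_nonpos_of_nonneg <;> [norm_num; positivity]
    linarith
  obtain ⟨θ, hθdef⟩ : ∃ θ : ℝ, θ = Real.arccos x := ⟨_, rfl⟩
  have hθcos : Real.cos θ = x := by rw [hθdef]; exact Real.cos_arccos hx1 hx2
  have hθ0 : 0 ≤ θ := hθdef ▸ Real.arccos_nonneg x
  have hθπ : θ ≤ π := hθdef ▸ Real.arccos_le_pi x
  obtain ⟨φ, hφdef⟩ : ∃ φ : ℝ, φ = π / 3 + θ / 3 := ⟨_, rfl⟩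
  obtain ⟨c, hcdef⟩ : ∃ c : ℝ, c = Real.cos φ := ⟨_, rfl⟩
  have hsin : Real.sin (π / 6 - (1/3) * θ) = c := by
    rw [hcdef, show φ = π / 2 - (π / 6 - (1/3) * θ) by rw [hφdef]; ring,
      Real.cos_pi_div_two_sub]
  have hη : η = (1 - Real.sqrt 46 * c) / 3 := by
    rw [η, ← hxdef, ← hθdef, hsin]; ring
  -- triple angle
  have hc3 : 4 * c ^ 3 - 3 * c = 149 / (23 * Real.sqrt 46) := by
    have h1 : Real.cos (3 * φ) = 4 * c ^ 3 - 3 * c := by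
      rw [hcdef]; exact Real.cos_three_mul φ
    have h2 : (3 : ℝ) * φ = π + θ := by rw [hφdef]; ring
    have h3 : Real.cos (π + θ) = -Real.cos θ := by
      rw [Real.cos_add]; simp
    rw [h2, h3, hθcos, hxdef] at h1
    rw [← h1]; ring
  -- cubic equation for η
  have hc3' : (4 * c ^ 3 - 3 * c) * (23 * Real.sqrt 46) = 149 := by
    rw [hc3]
    field_simp
  have hcube : 2 * η ^ 3 - 2 * η ^ 2 - 7 * η + 8 = 0 := by
    rw [hη]
    have key : 2 * (Real.sqrt 46 * c) ^ 3 - 69 * (Real.sqrt 46 * c) = 149 := by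
      linear_combination hc3' + 2 * Real.sqrt 46 * c ^ 3 * h46
    linear_combination (-1/27 : ℝ) * key
  -- bounds on c : φ ∈ [π/3, 2π/3]
  have hφlo : π / 3 ≤ φ := by rw [hφdef]; linarith
  have hφhi : φ ≤ 2 * π / 3 := by rw [hφdef]; linarith
  have hchi : c ≤ 1 / 2 := by
    have := Real.cos_le_cos_of_nonneg_of_le_pi (by linarith : (0:ℝ) ≤ π / 3)
      (by linarith : φ ≤ π) hφlo
    rwa [Real.cos_pi_div_three, ← hcdef] at this
  have hclo : -(1 / 2) ≤ c := by
    have h := Real.cos_le_cos_of_nonneg_of_le_pi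
      (by linarith : (0:ℝ) ≤ φ) (by linarith : 2 * π / 3 ≤ π) hφhi
    have h23 : Real.cos (2 * π / 3) = -(1/2) := by
      rw [show (2:ℝ) * π / 3 = π - π / 3 by ring, Real.cos_pi_sub, Real.cos_pi_div_three]
    rwa [h23, ← hcdef] at h
  -- crude bounds on η
  have hηlo : -0.8 ≤ η := by rw [hη]; nlinarith
  have hηhi : η ≤ 1.4651 := by rw [hη]; nlinarith
  -- sharp bounds on η from the cubic
  have hη1 : 1.262 ≤ η := by
    by_contra h
    push_neg at h
    have hq : 2 * η ^ 2 + 0.524 * η - 6.3387 < 0 := by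
      nlinarith [mul_nonneg (show (0:ℝ) ≤ 1.262 - η by linarith)
        (show (0:ℝ) ≤ η + 0.8 by linarith)]
    have hprod : 0 < (1.262 - η) * (6.3387 - 0.524 * η - 2 * η ^ 2) :=
      mul_pos (by linarith) (by linarith)
    nlinarith [hcube, hprod]
  have hη2 : η ≤ 1.2624 := by
    by_contra h
    push_neg at h
    have hq : 2 * η ^ 2 + 0.5248 * η - 6.337333 < 0 := by
      nlinarith [mul_nonneg (show (0:ℝ) ≤ 1.4651 - η by linarith)
        (show (0:ℝ) ≤ η + 0.8 by linarith)]
    have hprod : 0 < (η - 1.2624) * (6.337333 - 0.5248 * η - 2 * η ^ 2) :=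
      mul_pos (by linarith) (by linarith)
    nlinarith [hcube, hprod]
  refine ⟨⟨by linarith, by linarith⟩, hcube, ?_, by norm_num, ?_⟩
  · -- main inequality
    have hg : (0:ℝ) ≤ 4 * η ^ 2 - η ^ 4 := by nlinarith
    obtain ⟨s, hsdef⟩ : ∃ s : ℝ, s = Real.sqrt (4 * η ^ 2 - η ^ 4) := ⟨_, rfl⟩
    rw [← hsdef]
    have hs0 : 0 ≤ s := hsdef ▸ Real.sqrt_nonneg _
    have hs2 : s ^ 2 = 4 * η ^ 2 - η ^ 4 := by rw [hsdef]; exact Real.sq_sqrt hg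
    have hgb : 4 * η ^ 2 - η ^ 4 ≤ 3.834884 := by
      nlinarith [mul_nonneg (show (0:ℝ) ≤ 1.2624 ^ 2 - η ^ 2 by nlinarith)
        (show (0:ℝ) ≤ 4 - 1.2624 ^ 2 - η ^ 2 by nlinarith)]
    have hshi : s ≤ 1.95832 := by
      nlinarith [hs2, hs0, hgb, sq_nonneg (s - 1.95832)]
    nlinarith [hshi, hη1, hη2, sq_nonneg (η - 1.262)]
  · nlinarith [Real.sq_sqrt (show (0:ℝ) ≤ 15 by norm_num), Real.sqrt_nonneg 15]
end

section
/- For every v ≥ 5, the derivative of F_v(h) = ((v−1)/2)(2h − h²)·sin(2π/(v−1)) + (v−1)·sin(π/(v−1))·√(h²(2h − h²) + (2h − h²)²·cos²(π/(v−1))) at h = 4/3 is nonzero: F_v′(4/3) ≠ 0. -/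
open Real

/-- For v ≥ 5, the derivative of the pyramid surface-area function
F_v(h) = ((v−1)/2)(2h − h²)·sin(2π/(v−1)) + (v−1)·sin(π/(v−1))·√(h²(2h−h²) + (2h−h²)²cos²(π/(v−1)))
at h = 4/3 is nonzero. -/
theorem surface_deriv_ne_zero_at_volume_max (v : ℕ) (hv : 5 ≤ v) :
    deriv (fun h : ℝ =>
      ((v - 1 : ℝ) / 2) * (2 * h - h ^ 2) * Real.sin (2 * π / (v - 1)) +
        (v - 1 : ℝ) * Real.sin (π / (v - 1)) *
          Real.sqrt (h ^ 2 * (2 * h - h ^ 2) +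
            (2 * h - h ^ 2) ^ 2 * Real.cos (π / (v - 1)) ^ 2)) (4 / 3) ≠ 0 := by
  have hv4 : (4:ℝ) ≤ (v:ℝ) - 1 := by
    have : (5:ℝ) ≤ (v:ℝ) := by exact_mod_cast hv
    linarith
  set n : ℝ := (v:ℝ) - 1 with hn
  have hn0 : (0:ℝ) < n := by linarith
  set c : ℝ := Real.cos (π / n) with hcdef
  set s : ℝ := Real.sin (π / n) with hsdef
  have hapos : 0 < π / n := div_pos pi_pos hn0
  have hale : π / n ≤ π / 4 :=
    div_le_div_of_nonneg_left pi_pos.le (by norm_num) hv4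
  have hs : 0 < s := by
    rw [hsdef]
    apply Real.sin_pos_of_pos_of_lt_pi hapos
    calc π / n ≤ π / 4 := hale
      _ < π := by linarith [pi_pos]
  have h2 : (0:ℝ) < Real.sqrt 2 := Real.sqrt_pos.mpr (by norm_num)
  have h22 : Real.sqrt 2 ^ 2 = 2 := Real.sq_sqrt (by norm_num)
  have hcge : Real.sqrt 2 / 2 ≤ c := by
    rw [hcdef, ← Real.cos_pi_div_four]
    exact Real.cos_le_cos_of_nonneg_of_le_pi hapos.le (by linarith [pi_pos]) hale
  have hcpos : 0 < c := lt_of_lt_of_le (by positivity) hcge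
  have hcle : c ≤ 1 := hcdef ▸ Real.cos_le_one _
  have hc2 : 1/2 ≤ c^2 := by nlinarith
  -- derivatives
  have hsq : HasDerivAt (fun h : ℝ => h^2) (2*(4/3)) (4/3) := by
    simpa using hasDerivAt_pow 2 (4/3:ℝ)
  have hg : HasDerivAt (fun h : ℝ => 2*h - h^2) (2 - 2*(4/3)) (4/3) := by
    have h1 : HasDerivAt (fun h : ℝ => 2*h) 2 (4/3) := by
      simpa using (hasDerivAt_id (4/3:ℝ)).const_mul 2
    exact h1.sub hsq
  have hP : HasDerivAt (fun h : ℝ => h^2*(2*h-h^2) + (2*h-h^2)^2*c^2)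
      (32/27*(1 - c^2)) (4/3) := by
    have h : HasDerivAt (fun h : ℝ => h^2*(2*h-h^2) + (2*h-h^2)^2*c^2) _ (4/3) :=
      (hsq.mul hg).add ((hg.pow 2).mul_const (c^2))
    convert h using 1
    push_cast
    ring
  have hu : ((4:ℝ)/3)^2*(2*(4/3)-(4/3:ℝ)^2) + (2*(4/3)-(4/3:ℝ)^2)^2*c^2
      = 64/81*(2+c^2) := by ring
  have hupos : (0:ℝ) < (4/3:ℝ)^2*(2*(4/3)-(4/3:ℝ)^2) + (2*(4/3)-(4/3:ℝ)^2)^2*c^2 := by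
    rw [hu]; positivity
  have hsqrt : HasDerivAt (fun h : ℝ => Real.sqrt (h^2*(2*h-h^2) + (2*h-h^2)^2*c^2))
      ((32/27*(1 - c^2)) / (2 * (8/9 * Real.sqrt (2 + c^2)))) (4/3) := by
    have h := hP.sqrt (ne_of_gt hupos)
    convert h using 2
    rw [hu, show (64:ℝ)/81*(2+c^2) = (8/9)^2 * (2+c^2) by norm_num,
      Real.sqrt_mul (by positivity), Real.sqrt_sq (by norm_num)]
  set r : ℝ := Real.sqrt (2 + c^2) with hrdef
  have hrpos : 0 < r := Real.sqrt_pos.mpr (by positivity)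
  have hF : HasDerivAt (fun h : ℝ =>
      (n / 2) * (2 * h - h ^ 2) * Real.sin (2 * π / n) +
        n * s * Real.sqrt (h ^ 2 * (2 * h - h ^ 2) + (2 * h - h ^ 2) ^ 2 * c ^ 2))
      ((n/2) * (2 - 2*(4/3)) * Real.sin (2 * π / n)
        + n * s * ((32/27*(1 - c^2)) / (2 * (8/9 * r)))) (4/3) :=
    ((hg.const_mul (n/2)).mul_const _).add (hsqrt.const_mul (n*s))
  rw [hF.deriv]
  -- now show the value is negative
  have hsin2 : Real.sin (2 * π / n) = 2 * s * c := by
    rw [show 2 * π / n = 2 * (π / n) by ring, Real.sin_two_mul, hsdef, hcdef]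
  have hr2 : Real.sqrt 2 ≤ r := Real.sqrt_le_sqrt (by nlinarith)
  have hkey : (1 - c^2)/r < c := by
    have h1 : (1 - c^2)/r ≤ (1/2)/Real.sqrt 2 :=
      div_le_div₀ (by norm_num) (by linarith) h2 hr2
    have h3 : (1/2)/Real.sqrt 2 = Real.sqrt 2 / 4 := by
      rw [eq_div_iff (by norm_num), div_mul_eq_mul_div, div_eq_iff (ne_of_gt h2)]
      nlinarith
    calc (1 - c^2)/r ≤ (1/2)/Real.sqrt 2 := h1
      _ = Real.sqrt 2 / 4 := h3
      _ < Real.sqrt 2 / 2 := by linarith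
      _ ≤ c := hcge
  have hDeq : (n/2) * (2 - 2*(4/3)) * Real.sin (2 * π / n)
      + n * s * ((32/27*(1 - c^2)) / (2 * (8/9 * r)))
      = (2*n*s/3) * ((1 - c^2)/r - c) := by
    rw [hsin2]
    field_simp
    ring
  rw [hDeq]
  have hneg : (2*n*s/3) * ((1 - c^2)/r - c) < 0 :=
    mul_neg_of_pos_of_neg (by positivity) (by linarith)
  exact ne_of_lt hneg
end

section
/- Let g(h) = √(2h³ − h⁴ + c·(2h − h²)²) + √((2−h)²(2h − h²) + c·(2h − h²)²) for a constant c ∈ (0,1) and h ∈ (0,2). Then g(h) = g(2 − h) for all h ∈ (0,2), and g attains its strict maximum at h = 1 with g(1) = 2√(1 + c). -/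
open Real Set

/-- For c ∈ (0,1), the function
g(h) = √(2h³ − h⁴ + c(2h − h²)²) + √((2−h)²(2h − h²) + c(2h − h²)²) on (0,2) satisfies
g(h) = g(2 − h), and attains its strict maximum at h = 1 with g(1) = 2√(1 + c). -/
theorem bipyramid_g_symmetric_max (c : ℝ) (hc : c ∈ Ioo (0 : ℝ) 1)
    (g : ℝ → ℝ)
    (hg : g = fun h => Real.sqrt (2 * h ^ 3 - h ^ 4 + c * (2 * h - h ^ 2) ^ 2) +
      Real.sqrt ((2 - h) ^ 2 * (2 * h - h ^ 2) + c * (2 * h - h ^ 2) ^ 2)) :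
    (∀ h ∈ Ioo (0 : ℝ) 2, g h = g (2 - h)) ∧
    (∀ h ∈ Ioo (0 : ℝ) 2, h ≠ 1 → g h < g 1) ∧
    g 1 = 2 * Real.sqrt (1 + c) := by
  obtain ⟨hc0, hc1⟩ := hc
  subst hg
  have hg1 : Real.sqrt (2 * (1:ℝ) ^ 3 - 1 ^ 4 + c * (2 * 1 - 1 ^ 2) ^ 2) +
      Real.sqrt ((2 - (1:ℝ)) ^ 2 * (2 * 1 - 1 ^ 2) + c * (2 * 1 - 1 ^ 2) ^ 2)
      = 2 * Real.sqrt (1 + c) := by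
    norm_num [two_mul, add_comm]
  refine ⟨?_, ?_, hg1⟩
  · intro h _
    simp only
    rw [show 2 * h ^ 3 - h ^ 4 + c * (2 * h - h ^ 2) ^ 2 =
        (2 - (2 - h)) ^ 2 * (2 * (2 - h) - (2 - h) ^ 2) +
          c * (2 * (2 - h) - (2 - h) ^ 2) ^ 2 from by ring,
      show (2 - h) ^ 2 * (2 * h - h ^ 2) + c * (2 * h - h ^ 2) ^ 2 =
        2 * (2 - h) ^ 3 - (2 - h) ^ 4 + c * (2 * (2 - h) - (2 - h) ^ 2) ^ 2 from by ring]
    ring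
  · intro h hh hne
    obtain ⟨h0, h2⟩ := hh
    simp only
    rw [hg1]
    set a := 2 * h ^ 3 - h ^ 4 + c * (2 * h - h ^ 2) ^ 2 with ha
    set b := (2 - h) ^ 2 * (2 * h - h ^ 2) + c * (2 * h - h ^ 2) ^ 2 with hb
    have hu : 0 < 2 * h - h ^ 2 := by nlinarith
    have ha0 : 0 ≤ a := by nlinarith [sq_nonneg (2 * h - h ^ 2)]
    have hb0 : 0 ≤ b := by nlinarith [sq_nonneg (2 * h - h ^ 2), sq_nonneg (2 - h)]
    have hne1 : h - 1 ≠ 0 := sub_ne_zero.mpr hne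
    have ht : 0 < (h - 1) ^ 2 := by positivity
    have hcle : 0 ≤ 1 + c := by linarith
    have e : 2 * (a + b) = 4 * (1 + c) - 8 * c * (h - 1) ^ 2 - 4 * (1 - c) * (h - 1) ^ 4 := by
      rw [ha, hb]; ring
    have hsa := Real.sq_sqrt ha0
    have hsb := Real.sq_sqrt hb0
    have hd := sq_nonneg (Real.sqrt a - Real.sqrt b)
    have key : (Real.sqrt a + Real.sqrt b) ^ 2 < 4 * (1 + c) := by
      nlinarith [mul_pos hc0 ht, sq_nonneg ((h - 1) ^ 2), mul_nonneg (by linarith : (0:ℝ) ≤ 1 - c) (sq_nonneg ((h - 1) ^ 2))]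
    have hsq : (2 * Real.sqrt (1 + c)) ^ 2 = 4 * (1 + c) := by
      rw [mul_pow, Real.sq_sqrt hcle]; ring
    have hpos : (0:ℝ) ≤ 2 * Real.sqrt (1 + c) := by positivity
    refine lt_of_pow_lt_pow_left₀ 2 hpos ?_
    rw [hsq]
    exact key
end
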